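/- Let $A$ be a Noetherian ring, $z \in J(A)$ a regular normal element with $A/zA$ Artinian and $A$ $z$-adically complete. Suppose $I_1 \supseteq I_2 \supseteq I_3 \supseteq \cdots$ is a descending chain of left ideals of $A$ such that $I_n \not\subseteq Az$ for all $n$. Then $\bigcap_{n=1}^\infty I_n \neq 0$. -/

import Mathlib

/-- `z`-adic completeness of a ring. -/
def ZAdicComplete (A : Type*) [Ring A] (z : A) : Prop :=
  ∀ f : ℕ → A,
    (∀ n : ℕ, ∃ t : ℕ, ∀ i ≥ t, ∀ j ≥ t, f i - f j ∈ Ideal.span {z ^ n}) →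
    ∃ L : A, ∀ n : ℕ, ∃ t : ℕ, ∀ i ≥ t, f i - L ∈ Ideal.span {z ^ n}

namespace DChain
variable {A : Type*} [Ring A] {z : A}


lemma cancelL (hreg₁ : ∀ a : A, z * a = 0 → a = 0) {a b : A} (h : z * a = z * b) : a = b := by
  have : z * (a - b) = 0 := by rw [mul_sub, h, sub_self]
  have := hreg₁ _ this; rwa [sub_eq_zero] at this

lemma pow_normL (hnorm₁ : ∀ a : A, ∃ b : A, z * a = b * z) :
    ∀ (k : ℕ) (a : A), ∃ b : A, z ^ k * a = b * z ^ k := by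
  intro k
  induction k with
  | zero => intro a; exact ⟨a, by simp⟩
  | succ k ih =>
    intro a
    obtain ⟨b, hb⟩ := hnorm₁ a
    obtain ⟨c, hc⟩ := ih b
    exact ⟨c, by rw [pow_succ, mul_assoc, hb, ← mul_assoc, hc, mul_assoc]⟩

lemma pow_normR (hnorm₂ : ∀ a : A, ∃ b : A, a * z = z * b) :
    ∀ (k : ℕ) (a : A), ∃ b : A, a * z ^ k = z ^ k * b := by
  intro k
  induction k with
  | zero => intro a; exact ⟨a, by simp⟩
  | succ k ih =>
    intro a
    obtain ⟨b, hb⟩ := ih a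
    obtain ⟨c, hc⟩ := hnorm₂ b
    exact ⟨c, by rw [pow_succ, ← mul_assoc, hb, mul_assoc, hc, ← mul_assoc, ← pow_succ, pow_succ',
      mul_assoc]⟩

lemma pow_cancelL (hreg₁ : ∀ a : A, z * a = 0 → a = 0) :
    ∀ (k : ℕ) {a b : A}, z ^ k * a = z ^ k * b → a = b := by
  intro k
  induction k with
  | zero => intro a b h; simpa using h
  | succ k ih =>
    intro a b h
    rw [pow_succ', mul_assoc, mul_assoc] at h
    exact ih (cancelL hreg₁ h)

lemma mem_span_pow_iff (hnorm₁ : ∀ a : A, ∃ b : A, z * a = b * z)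
    (hnorm₂ : ∀ a : A, ∃ b : A, a * z = z * b) {k : ℕ} {x : A} :
    x ∈ Ideal.span {z ^ k} ↔ ∃ b : A, x = z ^ k * b := by
  rw [Ideal.mem_span_singleton']
  constructor
  · rintro ⟨a, rfl⟩
    obtain ⟨b, hb⟩ := pow_normR hnorm₂ k a
    exact ⟨b, hb⟩
  · rintro ⟨b, rfl⟩
    obtain ⟨c, hc⟩ := pow_normL hnorm₁ k b
    exact ⟨c, hc.symm⟩

lemma span_pow_anti {k m : ℕ} (h : k ≤ m) :
    Ideal.span {z ^ m} ≤ Ideal.span {z ^ k} := by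
  intro x hx
  rw [Ideal.mem_span_singleton'] at hx ⊢
  obtain ⟨a, rfl⟩ := hx
  exact ⟨a * z ^ (m - k), by rw [mul_assoc, ← pow_add, Nat.sub_add_cancel h]⟩

lemma jac_unit (x : A) (hx : x ∈ (⊥ : Ideal A).jacobson) : ∃ u : A, u * (1 - x) = 1 := by
  by_contra h
  push_neg at h
  have h1 : Ideal.span {1 - x} ≠ ⊤ := by
    intro ht
    have : (1 : A) ∈ Ideal.span {1 - x} := ht ▸ Submodule.mem_top
    rw [Ideal.mem_span_singleton'] at this
    obtain ⟨u, hu⟩ := this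
    exact h u hu
  obtain ⟨m, hm, hle⟩ := Ideal.exists_le_maximal _ h1
  have hxm : x ∈ m := Submodule.mem_sInf.mp hx m ⟨bot_le, hm⟩
  have h2 : (1 - x) ∈ m := hle (Ideal.subset_span rfl)
  have : (1 : A) ∈ m := by simpa using m.add_mem h2 hxm
  exact hm.ne_top ((Ideal.eq_top_iff_one m).mpr this)



lemma nakayama [IsNoetherianRing A] (hzJ : z ∈ (⊥ : Ideal A).jacobson)
    (hnorm₁ : ∀ a : A, ∃ b : A, z * a = b * z)
    (N : Ideal A) (hN : ∀ x ∈ N, ∃ y ∈ N, x = z * y) : N = ⊥ := by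
  obtain ⟨s, hs⟩ := (IsNoetherian.noetherian N : N.FG)
  suffices H : ∀ (n : ℕ) (s : Finset A), s.card = n → Ideal.span ↑s = N → N = ⊥ from
    H s.card s rfl hs
  clear hs s
  intro n
  induction n with
  | zero =>
    intro s hcard hspan
    rw [Finset.card_eq_zero] at hcard
    subst hcard
    simpa using hspan.symm
  | succ n ih =>
    intro s hcard hspan
    classical
    have hpos : 0 < s.card := by omega
    obtain ⟨a, ha⟩ := Finset.card_pos.mp hpos
    have haN : a ∈ N := hspan ▸ Ideal.subset_span ha
    obtain ⟨y, hyN, hay⟩ := hN a haN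
    rw [← hspan] at hyN
    obtain ⟨f, -, hf⟩ := Submodule.mem_span_finset.mp hyN
    -- a = z * y = ∑ i in s, (z * f i) * i
    have key : a = ∑ i ∈ s, (z * f i) * i := by
      rw [hay, ← hf, Finset.mul_sum]
      exact Finset.sum_congr rfl fun i _ => by rw [smul_eq_mul, mul_assoc]
    have hsplit : a - (z * f a) * a = ∑ i ∈ s.erase a, (z * f i) * i := by
      rw [sub_eq_iff_eq_add]
      conv_lhs => rw [key]
      exact (Finset.sum_erase_add s _ ha).symm
    have hrest : a - (z * f a) * a ∈ Ideal.span (↑(s.erase a) : Set A) := by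
      rw [hsplit]
      exact Submodule.sum_mem _ fun i hi =>
        Ideal.mul_mem_left _ _ (Ideal.subset_span hi)
    have hjac : z * f a ∈ (⊥ : Ideal A).jacobson := by
      obtain ⟨b, hb⟩ := hnorm₁ (f a)
      rw [hb]
      exact Ideal.mul_mem_left _ b hzJ
    obtain ⟨u, hu⟩ := jac_unit _ hjac
    have haerase : a ∈ Ideal.span (↑(s.erase a) : Set A) := by
      have h3 : u * (a - (z * f a) * a) = a := by
        rw [show a - z * f a * a = (1 - z * f a) * a by rw [sub_mul, one_mul],
          ← mul_assoc, hu, one_mul]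
      have h4 := Ideal.mul_mem_left (Ideal.span (↑(s.erase a) : Set A)) u hrest
      rwa [h3] at h4
    have hspan' : Ideal.span (↑(s.erase a) : Set A) = N := by
      rw [← hspan]
      apply le_antisymm
      · exact Ideal.span_mono (by simp [Finset.erase_subset])
      · rw [Ideal.span_le]
        intro i hi
        rcases eq_or_ne i a with rfl | hia
        · exact haerase
        · exact Ideal.subset_span (Finset.mem_erase.mpr ⟨hia, hi⟩)
    exact ih (s.erase a) (by rw [Finset.card_erase_of_mem ha]; omega) hspan'

lemma krull [IsNoetherianRing A] (hzJ : z ∈ (⊥ : Ideal A).jacobson)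
    (hreg₁ : ∀ a : A, z * a = 0 → a = 0)
    (hnorm₁ : ∀ a : A, ∃ b : A, z * a = b * z)
    (hnorm₂ : ∀ a : A, ∃ b : A, a * z = z * b) :
    (⨅ k : ℕ, Ideal.span {z ^ k}) = (⊥ : Ideal A) := by
  apply nakayama hzJ hnorm₁
  intro x hx
  rw [Submodule.mem_iInf] at hx
  obtain ⟨b, hb⟩ := (mem_span_pow_iff hnorm₁ hnorm₂).mp (hx 1)
  refine ⟨b, ?_, by rw [hb, pow_one]⟩
  rw [Submodule.mem_iInf]
  intro k
  obtain ⟨b', hb'⟩ := (mem_span_pow_iff hnorm₁ hnorm₂).mp (hx (k + 1))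
  have : z * b = z * (z ^ k * b') := by
    rw [← pow_one (z), ← hb, hb', pow_succ', mul_assoc]
    norm_num
  exact (mem_span_pow_iff hnorm₁ hnorm₂).mpr ⟨b', cancelL hreg₁ this⟩






/-- the left ideal `{a | z^k * a ∈ Idl}` -/
def Tid (hnorm₁ : ∀ a : A, ∃ b : A, z * a = b * z) (Idl : Ideal A) (k : ℕ) : Ideal A where
  carrier := {a | z ^ k * a ∈ Idl}
  zero_mem' := by simp
  add_mem' := fun {a b} ha hb => by
    simp only [Set.mem_setOf_eq, mul_add] at *
    exact Idl.add_mem ha hb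
  smul_mem' := fun c a ha => by
    simp only [Set.mem_setOf_eq, smul_eq_mul] at *
    obtain ⟨b, hb⟩ := pow_normL hnorm₁ k c
    rw [← mul_assoc, hb, mul_assoc]
    exact Idl.mul_mem_left b ha

lemma mul_right_mem_span_pow (hnorm₁ : ∀ a : A, ∃ b : A, z * a = b * z)
    (hnorm₂ : ∀ a : A, ∃ b : A, a * z = z * b) {k : ℕ} {v : A} (w : A)
    (hv : v ∈ Ideal.span {z ^ k}) : v * w ∈ Ideal.span {z ^ k} := by
  obtain ⟨e, rfl⟩ := (mem_span_pow_iff hnorm₁ hnorm₂).mp hv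
  exact (mem_span_pow_iff hnorm₁ hnorm₂).mpr ⟨e * w, by rw [mul_assoc]⟩

lemma ideal_closed [IsNoetherianRing A] (hzJ : z ∈ (⊥ : Ideal A).jacobson)
    (hreg₁ : ∀ a : A, z * a = 0 → a = 0)
    (hnorm₁ : ∀ a : A, ∃ b : A, z * a = b * z)
    (hnorm₂ : ∀ a : A, ∃ b : A, a * z = z * b)
    (hcomp : ZAdicComplete A z)
    (Idl : Ideal A) (x : A) (hx : ∀ k : ℕ, x ∈ Idl ⊔ Ideal.span {z ^ k}) : x ∈ Idl := by
  classical
  set T : ℕ →o Ideal A :=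
    ⟨Tid hnorm₁ Idl, monotone_nat_of_le_succ (by
      intro k a ha
      show z ^ (k+1) * a ∈ Idl
      rw [pow_succ', mul_assoc]
      exact Idl.mul_mem_left z ha)⟩ with hT
  obtain ⟨c, hc⟩ := monotone_stabilizes_iff_noetherian.mpr inferInstance T
  obtain ⟨s, hs⟩ := (IsNoetherian.noetherian (T c) : (T c).FG)
  -- decompose x
  have hmem : ∀ k : ℕ, ∃ i ∈ Idl, ∃ r ∈ Ideal.span {z ^ k}, i + r = x := fun k =>
    Submodule.mem_sup.mp (hx k)
  choose i hi r hr hir using hmem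
  -- differences
  have hd : ∀ k : ℕ, i (k + 1) - i k ∈ Ideal.span {z ^ k} := by
    intro k
    have : i (k + 1) - i k = r k - r (k + 1) := by
      have e1 : r k = x - i k := eq_sub_iff_add_eq.mpr (by rw [add_comm]; exact hir k)
      have e2 : r (k + 1) = x - i (k + 1) :=
        eq_sub_iff_add_eq.mpr (by rw [add_comm]; exact hir (k + 1))
      rw [e1, e2]; abel
    rw [this]
    exact Submodule.sub_mem _ (hr k) (span_pow_anti (Nat.le_succ k) (hr (k + 1)))
  have hdI : ∀ k : ℕ, i (k + 1) - i k ∈ Idl := fun k => Idl.sub_mem (hi (k+1)) (hi k)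
  -- write differences with pow factor
  have hb : ∀ k : ℕ, ∃ b : A, i (c + k + 1) - i (c + k) = z ^ (c + k) * b :=
    fun k => (mem_span_pow_iff hnorm₁ hnorm₂).mp (hd (c + k))
  choose b hbspec using hb
  have hbT : ∀ k : ℕ, b k ∈ T c := by
    intro k
    have : b k ∈ T (c + k) := by
      show z ^ (c + k) * b k ∈ Idl
      rw [← hbspec k]; exact hdI (c + k)
    rwa [hc (c + k) (Nat.le_add_right c k)]
  -- coefficients
  have hbs : ∀ k : ℕ, ∃ f : A → A, ∑ w ∈ s, f w • w = b k := by
    intro k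
    have := hbT k
    rw [← hs] at this
    exact (Submodule.mem_span_finset.mp this).imp fun _ h => h.2
  choose F hF using hbs
  set cc : ℕ → A → A := fun k w => z ^ (c + k) * F k w with hcc
  have hccmem : ∀ k w, cc k w ∈ Ideal.span {z ^ (c + k)} := fun k w =>
    (mem_span_pow_iff hnorm₁ hnorm₂).mpr ⟨F k w, rfl⟩
  have hdsum : ∀ k : ℕ, i (c + k + 1) - i (c + k) = ∑ w ∈ s, cc k w * w := by
    intro k
    rw [hbspec k, ← hF k, Finset.mul_sum]
    exact Finset.sum_congr rfl fun w _ => by rw [smul_eq_mul, mul_assoc]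
  -- partial sums and limits
  set P : A → ℕ → A := fun w K => ∑ k ∈ Finset.range K, cc k w with hP
  have hcauchy : ∀ w : A, ∀ n : ℕ, ∃ t : ℕ, ∀ p ≥ t, ∀ q ≥ t,
      P w p - P w q ∈ Ideal.span {z ^ n} := by
    intro w n
    refine ⟨n, ?_⟩
    have key : ∀ q p, q ≤ p → n ≤ q → P w p - P w q ∈ Ideal.span {z ^ n} := by
      intro q p hqp hnq
      have : P w p - P w q = ∑ k ∈ Finset.Ico q p, cc k w := by
        rw [hP]
        simp only
        rw [← Finset.sum_Ico_eq_sub _ hqp]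
      rw [this]
      refine Submodule.sum_mem _ fun k hk => ?_
      have hnk : n ≤ c + k := by
        have := (Finset.mem_Ico.mp hk).1; omega
      exact span_pow_anti hnk (hccmem k w)
    intro p hp q hq
    rcases le_total q p with h | h
    · exact key q p h hq
    · have := key p q h hp
      have h2 := Submodule.neg_mem _ this
      rwa [neg_sub] at h2
  choose C hC using fun w : A => hcomp (P w) (hcauchy w)
  -- C w ∈ span {z^c}
  have hCc : ∀ w : A, C w ∈ Ideal.span {z ^ c} := by
    intro w
    obtain ⟨t, ht⟩ := hC w c
    have h1 := ht t le_rfl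
    have h2 : P w t ∈ Ideal.span {z ^ c} :=
      Submodule.sum_mem _ fun k _ => span_pow_anti (Nat.le_add_right c k) (hccmem k w)
    have := Submodule.sub_mem _ h2 h1
    simpa using this
  -- y ∈ Idl
  have hCwI : ∀ w ∈ s, C w * w ∈ Idl := by
    intro w hw
    obtain ⟨e, he⟩ := (mem_span_pow_iff hnorm₁ hnorm₂).mp (hCc w)
    have hwT : w ∈ T c := hs ▸ Ideal.subset_span hw
    have : e * w ∈ T c := (T c).mul_mem_left e hwT
    have h5 : z ^ c * (e * w) ∈ Idl := this
    rw [he, mul_assoc]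
    exact h5
  set y : A := i c + ∑ w ∈ s, C w * w with hy
  have hyI : y ∈ Idl := Idl.add_mem (hi c) (Submodule.sum_mem _ hCwI)
  -- x = y
  have hxy : x - y ∈ (⨅ m : ℕ, Ideal.span {(z : A) ^ m}) := by
    rw [Submodule.mem_iInf]
    intro m
    -- choose a large K
    have hts : ∀ w : A, ∃ t : ℕ, ∀ p ≥ t, P w p - C w ∈ Ideal.span {z ^ m} := fun w => hC w m
    choose t ht using hts
    set K : ℕ := max m (s.sup t) with hK
    have hKt : ∀ w ∈ s, t w ≤ K := fun w hw => le_trans (Finset.le_sup hw) (le_max_right _ _)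
    have hmK : m ≤ K := le_max_left _ _
    -- telescope
    have htel : i (c + K) - i c = ∑ w ∈ s, P w K * w := by
      have h6 : i (c + K) - i c = ∑ k ∈ Finset.range K, (i (c + k + 1) - i (c + k)) := by
        have h8 := Finset.sum_range_sub (fun k => i (c + k)) K
        simp only [Nat.add_succ] at h8 ⊢
        rw [h8, Nat.add_zero]
      rw [h6]
      rw [Finset.sum_congr rfl fun k _ => hdsum k]
      rw [Finset.sum_comm]
      exact Finset.sum_congr rfl fun w _ => by rw [hP]; simp only; rw [Finset.sum_mul]
    have hxiy : x - y = (x - i (c + K)) + ∑ w ∈ s, (P w K - C w) * w := by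
      have h7 : ∑ w ∈ s, (P w K - C w) * w = (i (c + K) - i c) - ∑ w ∈ s, C w * w := by
        rw [htel, ← Finset.sum_sub_distrib]
        exact Finset.sum_congr rfl fun w _ => by rw [sub_mul]
      rw [h7, hy]
      abel
    rw [hxiy]
    refine Submodule.add_mem _ ?_ (Submodule.sum_mem _ fun w hw => ?_)
    · have : x - i (c + K) = r (c + K) := by
        rw [← hir (c + K)]; abel
      rw [this]
      exact span_pow_anti (le_trans hmK (Nat.le_add_left K c)) (hr (c + K))
    · exact mul_right_mem_span_pow hnorm₁ hnorm₂ w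
        (span_pow_anti le_rfl (ht w K (hKt w hw)))
  rw [krull hzJ hreg₁ hnorm₁ hnorm₂] at hxy
  have : x = y := by rwa [Submodule.mem_bot, sub_eq_zero] at hxy
  rw [this]; exact hyI



lemma artinian_quot (hart : IsArtinian A (A ⧸ (Ideal.span {z} : Ideal A))) :
    ∀ k : ℕ, IsArtinian A (A ⧸ (Ideal.span {z ^ k} : Ideal A)) := by
  intro k
  induction k with
  | zero =>
    have h0 : (Ideal.span {z ^ 0} : Ideal A) = ⊤ := by
      rw [pow_zero, Ideal.span_singleton_one]
    have : Subsingleton (A ⧸ (Ideal.span {z ^ 0} : Ideal A)) := by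
      rw [h0]; exact Submodule.Quotient.subsingleton_iff.mpr rfl
    infer_instance
  | succ k ih =>
    have hart1 : IsArtinian A (A ⧸ (Ideal.span {z ^ 1} : Ideal A)) := by
      rw [pow_one]; exact hart
    set Sk : Ideal A := Ideal.span {z ^ k} with hSk
    set Sk1 : Ideal A := Ideal.span {z ^ (k + 1)} with hSk1
    -- φ : A →ₗ[A] A ⧸ Sk1, a ↦ a • z^k
    set φ : A →ₗ[A] A ⧸ Sk1 := Sk1.mkQ.comp (LinearMap.toSpanSingleton A A (z ^ k)) with hφ
    have hker : (Ideal.span {z ^ 1} : Ideal A) ≤ LinearMap.ker φ := by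
      rw [Ideal.span_le]
      rintro _ rfl
      simp only [SetLike.mem_coe, LinearMap.mem_ker, hφ, LinearMap.comp_apply,
        LinearMap.toSpanSingleton_apply, Submodule.mkQ_apply]
      rw [Submodule.Quotient.mk_eq_zero]
      have : (z ^ 1) • (z ^ k) = z ^ (k + 1) := by
        rw [smul_eq_mul, pow_one, ← pow_succ']
      rw [this]
      exact Ideal.subset_span rfl
    set f : (A ⧸ (Ideal.span {z ^ 1} : Ideal A)) →ₗ[A] A ⧸ Sk1 :=
      Submodule.liftQ _ φ hker with hf
    have hSle : Sk1 ≤ Sk := by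
      rw [Ideal.span_le]
      rintro _ rfl
      have : z ^ (k + 1) = z • z ^ k := by rw [smul_eq_mul, ← pow_succ']
      rw [SetLike.mem_coe, this]
      exact Submodule.smul_mem _ z (Ideal.subset_span rfl)
    set g : (A ⧸ Sk1) →ₗ[A] A ⧸ Sk :=
      Submodule.liftQ _ Sk.mkQ (by rwa [Submodule.ker_mkQ]) with hg
    have hrange : LinearMap.range f = LinearMap.ker g := by
      rw [hf, Submodule.range_liftQ, hg, Submodule.ker_liftQ, Submodule.ker_mkQ, hφ,
        LinearMap.range_comp, ← LinearMap.span_singleton_eq_range]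
    exact isArtinian_of_range_eq_ker f g hrange

lemma chain_stab (k : ℕ) (hart : IsArtinian A (A ⧸ (Ideal.span {z ^ k} : Ideal A)))
    (I : ℕ → Ideal A) (hI : Antitone I) :
    ∃ N : ℕ, ∀ n ≥ N, I n ⊔ Ideal.span {z ^ k} = I N ⊔ Ideal.span {z ^ k} := by
  set Sk : Ideal A := Ideal.span {z ^ k} with hSk
  set f : ℕ →o (Submodule A (A ⧸ Sk))ᵒᵈ :=
    ⟨fun n => Submodule.map Sk.mkQ (I n ⊔ Sk), by
      intro a b hab
      exact Submodule.map_mono (sup_le_sup_right (hI hab) Sk)⟩ with hff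
  obtain ⟨N, hN⟩ := IsArtinian.monotone_stabilizes f
  refine ⟨N, fun n hn => ?_⟩
  have h1 : f N = f n := hN n hn
  have h2 : Submodule.map Sk.mkQ (I N ⊔ Sk) = Submodule.map Sk.mkQ (I n ⊔ Sk) := h1
  have h3 := congrArg (Submodule.comap Sk.mkQ) h2
  rw [Submodule.comap_map_mkQ, Submodule.comap_map_mkQ] at h3
  have e : ∀ m : ℕ, Sk ⊔ (I m ⊔ Sk) = I m ⊔ Sk := fun m => by
    rw [sup_comm, sup_assoc, sup_idem]
  rw [e, e] at h3
  exact h3.symm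

lemma dep_choice {α : Type*} (P : ℕ → α → Prop) (R : ℕ → α → α → Prop)
    (h0 : ∃ a, P 0 a) (hstep : ∀ k a, P k a → ∃ b, P (k + 1) b ∧ R k a b) :
    ∃ f : ℕ → α, (∀ k, P k (f k)) ∧ ∀ k, R k (f k) (f (k + 1)) := by
  classical
  let g : ∀ k : ℕ, {a : α // P k a} := fun k =>
    Nat.rec ⟨Classical.choose h0, Classical.choose_spec h0⟩
      (fun k ih => ⟨Classical.choose (hstep k ih.1 ih.2),
        (Classical.choose_spec (hstep k ih.1 ih.2)).1⟩) k
  refine ⟨fun k => (g k).1, fun k => (g k).2, fun k => ?_⟩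
  exact (Classical.choose_spec (hstep k (g k).1 (g k).2)).2

end DChain

/-!
STATEMENT 9: Let `A` be a Noetherian ring, `z ∈ J(A)` a regular normal element with `A/zA`
Artinian and `A` `z`-adically complete.  Suppose `I₁ ⊇ I₂ ⊇ ⋯` is a descending chain of left
ideals of `A` such that `Iₙ ⊄ Az` for all `n`.  Then `⋂ₙ Iₙ ≠ 0`.
-/
open DChain in
theorem descending_chain_has_nonzero_intersection
    (A : Type*) [Ring A] [IsNoetherianRing A]
    (z : A)
    (hzJ : z ∈ (⊥ : Ideal A).jacobson)
    (hreg₁ : ∀ a : A, z * a = 0 → a = 0) (hreg₂ : ∀ a : A, a * z = 0 → a = 0)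
    (hnorm₁ : ∀ a : A, ∃ b : A, z * a = b * z)
    (hnorm₂ : ∀ a : A, ∃ b : A, a * z = z * b)
    (hart : IsArtinian A (A ⧸ (Ideal.span {z} : Ideal A)))
    (hcomp : ZAdicComplete A z)
    (I : ℕ → Ideal A)
    (hdesc : ∀ n : ℕ, I (n + 1) ≤ I n)
    (hnot : ∀ n : ℕ, ¬ I n ≤ Ideal.span {z}) :
    ∃ x : A, x ≠ 0 ∧ ∀ n : ℕ, x ∈ I n := by
  classical
  have hI : Antitone I := antitone_nat_of_succ_le hdesc
  have hart' := artinian_quot hart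
  have hstab : ∀ k : ℕ, ∃ N : ℕ, ∀ n ≥ N,
      I n ⊔ Ideal.span {z ^ k} = I N ⊔ Ideal.span {z ^ k} :=
    fun k => chain_stab k (hart' k) I hI
  choose N hN using hstab
  have hz1 : (Ideal.span {z} : Ideal A) = Ideal.span {z ^ 1} := by rw [pow_one]
  set E : ℕ → Ideal A := fun k => I (N k) ⊔ Ideal.span {z ^ k} with hE
  have hE1 : ∀ k n, E k ≤ I n ⊔ Ideal.span {z ^ k} := by
    intro k n
    rcases le_total n (N k) with h | h
    · exact sup_le_sup_right (hI h) _
    · exact (hN k n h).ge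
  have hE2 : ∀ k, E k ≤ E (k + 1) ⊔ Ideal.span {z ^ k} := by
    intro k
    have ha : E k = I (max (N k) (N (k+1))) ⊔ Ideal.span {z ^ k} :=
      (hN k _ (le_max_left _ _)).symm
    have hb2 : E (k+1) = I (max (N k) (N (k+1))) ⊔ Ideal.span {z ^ (k+1)} :=
      (hN (k+1) _ (le_max_right _ _)).symm
    rw [ha, hb2]
    exact sup_le (le_trans le_sup_left le_sup_left) le_sup_right
  have hE3 : ∀ k, ∃ a ∈ E k, a ∉ Ideal.span {z} := by
    intro k
    obtain ⟨a, haI, haz⟩ := SetLike.not_le_iff_exists.mp (hnot (N k))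
    exact ⟨a, (le_sup_left : I (N k) ≤ E k) haI, haz⟩
  have hstep : ∀ (k : ℕ) (a : A), (a ∈ E (k+1) ∧ a ∉ Ideal.span {z}) →
      ∃ b, (b ∈ E (k+1+1) ∧ b ∉ Ideal.span {z}) ∧ a - b ∈ Ideal.span {z ^ (k+1)} := by
    rintro k a ⟨haE, haz⟩
    have h1 : a ∈ E (k+2) ⊔ Ideal.span {z ^ (k+1)} := hE2 (k+1) haE
    obtain ⟨b, hb, r, hrr, hbr⟩ := Submodule.mem_sup.mp h1
    refine ⟨b, ⟨hb, ?_⟩, ?_⟩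
    · intro hbz
      apply haz
      rw [← hbr, hz1]
      refine Submodule.add_mem _ (hz1 ▸ hbz) (span_pow_anti (by omega) hrr)
    · have : a - b = r := by rw [← hbr]; abel
      rw [this]; exact hrr
  obtain ⟨xs, hxsP, hxsR⟩ := dep_choice
      (fun k a => a ∈ E (k+1) ∧ a ∉ Ideal.span {z})
      (fun k a b => a - b ∈ Ideal.span {z ^ (k+1)})
      (hE3 1) hstep
  have hdiff : ∀ j i : ℕ, j ≤ i → xs j - xs i ∈ Ideal.span {z ^ (j+1)} := by
    intro j i hji
    induction i, hji using Nat.le_induction with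
    | base => simpa using Submodule.zero_mem _
    | succ i hji ih =>
      have h1 := hxsR i
      have h2 : Ideal.span {z ^ (i+1)} ≤ Ideal.span {z ^ (j+1)} :=
        span_pow_anti (by omega)
      have h3 := Submodule.add_mem _ ih (h2 h1)
      have h4 : (xs j - xs i) + (xs i - xs (i+1)) = xs j - xs (i+1) := by abel
      rwa [h4] at h3
  have hcauchy : ∀ n : ℕ, ∃ t : ℕ, ∀ i ≥ t, ∀ j ≥ t,
      xs i - xs j ∈ Ideal.span {z ^ n} := by
    intro n
    refine ⟨n, fun i hi j hj => ?_⟩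
    rcases le_total j i with h | h
    · have := hdiff j i h
      have h2 := Submodule.neg_mem _ this
      rw [neg_sub] at h2
      exact span_pow_anti (by omega) h2
    · exact span_pow_anti (by omega) (hdiff i j h)
  obtain ⟨L, hL⟩ := hcomp xs hcauchy
  have hLnz : L ∉ Ideal.span {z} := by
    intro hLz
    obtain ⟨t, ht⟩ := hL 1
    have h1 := ht t le_rfl
    have h2 : xs t ∈ Ideal.span {z} := by
      have : xs t = (xs t - L) + L := by abel
      rw [this, hz1]
      exact Submodule.add_mem _ h1 (hz1 ▸ hLz)
    exact (hxsP t).2 h2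
  refine ⟨L, fun h => hLnz (h ▸ Submodule.zero_mem _), fun n => ?_⟩
  apply ideal_closed hzJ hreg₁ hnorm₁ hnorm₂ hcomp (I n) L
  intro k
  obtain ⟨t, ht⟩ := hL k
  have h1 : xs (max t k) - L ∈ Ideal.span {z ^ k} := ht _ (le_max_left _ _)
  have h2 : xs (max t k) ∈ I n ⊔ Ideal.span {z ^ k} := by
    have h3 : xs (max t k) ∈ E (max t k + 1) := (hxsP _).1
    have h4 := hE1 (max t k + 1) n h3
    exact (sup_le_sup_left (span_pow_anti (by omega : k ≤ max t k + 1)) (I n)) h4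
  have h5 : L = xs (max t k) - (xs (max t k) - L) := by abel
  rw [h5]
  exact Submodule.sub_mem _ h2 ((le_sup_right : Ideal.span {z ^ k} ≤ _) h1)
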